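/- Let K be a field, n ≥ 1, and let M be an n×n matrix over K which is lower Hessenberg in its last n−1 columns, i.e. M_{j,k} = 0 whenever k ≥ j+2, and whose superdiagonal entries are nonzero: M_{j,j+1} ≠ 0 for 1 ≤ j ≤ n−1. Define c_n = ∏_{j=1}^{n−1} (−M_{j,j+1}) and, descending, c_{ℓ−1} = (−M_{ℓ−1,ℓ})^{−1} · Σ_{j=ℓ}^{n} c_j · M_{j,ℓ} for 1 < ℓ ≤ n. Then det M = Σ_{ℓ=1}^{n} c_ℓ · M_{ℓ,1}. -/

import Mathlib

/-- **Determinant of a lower Hessenberg matrix via a descending linear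
recurrence.**  `n+1` plays the role of the `n ≥ 1` of the informal statement;
indices are `0`-based, so the informal entry `M_{j,k}` is `M (j-1) (k-1)`, the
first column is column `0`, the superdiagonal entries `M_{j,j+1}` are
`M (Fin.castSucc j) (Fin.succ j)` for `j : Fin n`, and `Fin.last n` corresponds
to the informal index `n`. -/
theorem hessenberg_det_first_column_expansion
    {K : Type*} [Field K] (n : ℕ)
    (M : Matrix (Fin (n + 1)) (Fin (n + 1)) K)
    (hHess : ∀ j k : Fin (n + 1), (j : ℕ) + 2 ≤ (k : ℕ) → M j k = 0)
    (hsuper : ∀ j : Fin n, M (Fin.castSucc j) (Fin.succ j) ≠ 0)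
    (c : Fin (n + 1) → K)
    (hclast : c (Fin.last n) = ∏ j : Fin n, (-(M (Fin.castSucc j) (Fin.succ j))))
    (hcrec : ∀ ℓ : Fin n,
      c (Fin.castSucc ℓ) = (-(M (Fin.castSucc ℓ) (Fin.succ ℓ)))⁻¹ *
        ∑ j ∈ Finset.Ioi (Fin.castSucc ℓ), c j * M j (Fin.succ ℓ)) :
    M.det = ∑ ℓ : Fin (n + 1), c ℓ * M ℓ 0 := by
  set s := ∑ ℓ : Fin (n + 1), c ℓ * M ℓ 0 with hs
  -- The linear combination of the rows with coefficients `c` kills every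
  -- column except column `0`.
  have hzero : ∀ ℓ : Fin n, ∑ j : Fin (n + 1), c j * M j (Fin.succ ℓ) = 0 := by
    intro ℓ
    have ha : (-(M (Fin.castSucc ℓ) (Fin.succ ℓ))) ≠ 0 := neg_ne_zero.mpr (hsuper ℓ)
    have hrec : ∑ j ∈ Finset.Ioi (Fin.castSucc ℓ), c j * M j (Fin.succ ℓ)
        = (-(M (Fin.castSucc ℓ) (Fin.succ ℓ))) * c (Fin.castSucc ℓ) := by
      rw [hcrec ℓ, ← mul_assoc, mul_inv_cancel₀ ha, one_mul]
    have huniv : (Finset.Iic (Fin.castSucc ℓ)) ∪ (Finset.Ioi (Fin.castSucc ℓ))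
        = (Finset.univ : Finset (Fin (n + 1))) := by
      ext j
      simp [le_or_gt]
    have hdisj : Disjoint (Finset.Iic (Fin.castSucc ℓ)) (Finset.Ioi (Fin.castSucc ℓ)) := by
      rw [Finset.disjoint_left]
      intro j hj hj'
      exact absurd (Finset.mem_Ioi.mp hj') (not_lt.mpr (Finset.mem_Iic.mp hj))
    have hIic : ∑ j ∈ Finset.Iic (Fin.castSucc ℓ), c j * M j (Fin.succ ℓ)
        = c (Fin.castSucc ℓ) * M (Fin.castSucc ℓ) (Fin.succ ℓ) := by
      refine Finset.sum_eq_single_of_mem _ (Finset.mem_Iic.mpr le_rfl) ?_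
      intro j hj hne
      have hlt : j < Fin.castSucc ℓ := lt_of_le_of_ne (Finset.mem_Iic.mp hj) hne
      have hjlt : (j : ℕ) < (ℓ : ℕ) := by simpa [Fin.lt_iff_val_lt_val] using hlt
      have hz : M j (Fin.succ ℓ) = 0 := by
        apply hHess
        simp only [Fin.val_succ]
        omega
      simp [hz]
    calc ∑ j : Fin (n + 1), c j * M j (Fin.succ ℓ)
        = ∑ j ∈ (Finset.Iic (Fin.castSucc ℓ)) ∪ (Finset.Ioi (Fin.castSucc ℓ)),
            c j * M j (Fin.succ ℓ) := by rw [huniv]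
      _ = (∑ j ∈ Finset.Iic (Fin.castSucc ℓ), c j * M j (Fin.succ ℓ))
            + ∑ j ∈ Finset.Ioi (Fin.castSucc ℓ), c j * M j (Fin.succ ℓ) :=
          Finset.sum_union hdisj
      _ = 0 := by rw [hIic, hrec]; ring
  -- Key identity via the adjugate.
  have key : s * Matrix.adjugate M 0 (Fin.last n) = c (Fin.last n) * M.det := by
    have h1 : ∑ j : Fin (n + 1), c j * (M * Matrix.adjugate M) j (Fin.last n)
        = c (Fin.last n) * M.det := by
      simp [Matrix.mul_adjugate, Matrix.one_apply, mul_comm]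
    rw [← h1]
    simp only [Matrix.mul_apply, Finset.mul_sum]
    rw [Finset.sum_comm]
    have h2 : ∀ k : Fin (n + 1),
        ∑ j : Fin (n + 1), c j * (M j k * Matrix.adjugate M k (Fin.last n))
          = (∑ j : Fin (n + 1), c j * M j k) * Matrix.adjugate M k (Fin.last n) := by
      intro k
      rw [Finset.sum_mul]
      exact Finset.sum_congr rfl fun j _ => by ring
    calc s * Matrix.adjugate M 0 (Fin.last n)
        = ∑ k : Fin (n + 1), (∑ j : Fin (n + 1), c j * M j k)
            * Matrix.adjugate M k (Fin.last n) := by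
          rw [Fintype.sum_eq_single (0 : Fin (n + 1))]
          · intro k hk
            obtain ⟨ℓ, rfl⟩ := Fin.exists_succ_eq.mpr hk
            rw [hzero ℓ, zero_mul]
      _ = _ := by
          exact (Finset.sum_congr rfl fun k _ => (h2 k).symm)
  -- Compute the adjugate entry: it is `(-1)^n` times a lower triangular det.
  have hadj : Matrix.adjugate M 0 (Fin.last n)
      = (-1 : K) ^ n * ∏ j : Fin n, M (Fin.castSucc j) (Fin.succ j) := by
    rw [Matrix.adjugate_fin_succ_eq_det_submatrix]
    have hsub : (M.submatrix (Fin.last n).succAbove (0 : Fin (n + 1)).succAbove).det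
        = ∏ j : Fin n, M (Fin.castSucc j) (Fin.succ j) := by
      rw [Matrix.det_of_lowerTriangular]
      · refine Finset.prod_congr rfl fun j _ => ?_
        simp [Matrix.submatrix_apply, Fin.succAbove_last, Fin.zero_succAbove]
      · intro i j hij
        simp only [Matrix.submatrix_apply, Fin.succAbove_last, Fin.zero_succAbove]
        apply hHess
        have h' : (i : ℕ) < (j : ℕ) := hij
        simp only [Fin.val_succ, Fin.coe_castSucc]
        omega
    rw [hsub]
    norm_num
  have hprodne : (∏ j : Fin n, M (Fin.castSucc j) (Fin.succ j)) ≠ 0 :=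
    Finset.prod_ne_zero_iff.mpr fun j _ => hsuper j
  have hclast' : c (Fin.last n) = (-1 : K) ^ n * ∏ j : Fin n, M (Fin.castSucc j) (Fin.succ j) := by
    rw [hclast]
    have : ∀ j : Fin n, -M (Fin.castSucc j) (Fin.succ j)
        = (-1 : K) * M (Fin.castSucc j) (Fin.succ j) := fun j => by ring
    simp_rw [this, Finset.prod_mul_distrib, Finset.prod_const,
      Finset.card_univ, Fintype.card_fin]
  have hne : c (Fin.last n) ≠ 0 := by
    rw [hclast']
    exact mul_ne_zero (pow_ne_zero _ (by norm_num)) hprodne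
  have : s * c (Fin.last n) = c (Fin.last n) * M.det := by
    rw [← key, hadj, hclast']
  field_simp at this
  exact this.symm
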